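/- Threshold equivalence: let B = diag(λ_1,…,λ_ℓ) with λ_j > 0 and let V be an irreducible Metzler matrix (off-diagonal entries nonnegative) with α(V) < 0. Then ρ(−B V^{−1}) > 1 if and only if α(B + V) > 0; moreover ρ(−B V^{−1}) = 1 if and only if α(B + V) = 0, and ρ(−B V^{−1}) < 1 if and only if α(B + V) < 0. -/

import Mathlib

open Finset Filter Topology

/-- A square matrix is irreducible: the directed graph whose edges are the nonzero
off-diagonal entries is strongly connected. -/
def IrreducibleSq (ℓ : ℕ) (M : Matrix (Fin ℓ) (Fin ℓ) ℝ) : Prop :=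
  ∀ i j : Fin ℓ, i ≠ j → ∃ s : ℕ, 2 ≤ s ∧ ∃ c : ℕ → Fin ℓ,
    c 0 = i ∧ c (s - 1) = j ∧
    ∀ r, r < s - 1 → c r ≠ c (r + 1) ∧ M (c r) (c (r + 1)) ≠ 0

/-- The spectral radius of a real matrix: the largest modulus of its (complex) eigenvalues. -/
noncomputable def specRad (ℓ : ℕ) (M : Matrix (Fin ℓ) (Fin ℓ) ℝ) : ℝ :=
  sSup ((fun δ : ℂ => ‖δ‖) '' spectrum ℂ (M.map (Complex.ofReal ·)))

open scoped NNReal ENNReal Pointwise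

namespace ThresholdAux

attribute [local instance] Matrix.linftyOpNormedAddCommGroup Matrix.linftyOpNormedRing
  Matrix.linftyOpNormedAlgebra Matrix.linftyOpNormedSpace

variable {ℓ : ℕ}

local notation "Mat" => Matrix (Fin ℓ) (Fin ℓ) ℝ

/-- complexification -/
noncomputable abbrev cx (M : Mat) : Matrix (Fin ℓ) (Fin ℓ) ℂ := M.map (Complex.ofReal ·)

lemma cx_mul (A B : Mat) : cx (A * B) = cx A * cx B := by
  ext i j
  simp [Matrix.mul_apply, Matrix.map_apply]

lemma cx_one : cx (1 : Mat) = 1 := by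
  ext i j
  by_cases h : i = j <;> simp [Matrix.map_apply, Matrix.one_apply, h]

lemma cx_pow (A : Mat) (n : ℕ) : cx (A ^ n) = cx A ^ n := by
  induction n with
  | zero => simpa using cx_one
  | succ n ih => rw [pow_succ, cx_mul, ih, pow_succ]

lemma cx_add (A B : Mat) : cx (A + B) = cx A + cx B := by
  ext i j; simp [Matrix.map_apply]

lemma cx_neg (A : Mat) : cx (-A) = -cx A := by
  ext i j; simp [Matrix.map_apply]

lemma cx_smul (r : ℝ) (A : Mat) : cx (r • A) = (r : ℂ) • cx A := by
  ext i j; simp [Matrix.map_apply]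

lemma nnnorm_cx (M : Mat) : ‖cx M‖₊ = ‖M‖₊ := by
  simp [Matrix.linfty_opNNNorm_def, Matrix.map_apply]

lemma entry_le_nnnorm (M : Mat) (i j : Fin ℓ) : ‖M i j‖₊ ≤ ‖M‖₊ := by
  rw [Matrix.linfty_opNNNorm_def]
  refine le_trans ?_ (Finset.le_sup (Finset.mem_univ i))
  exact Finset.single_le_sum (f := fun k => ‖M i k‖₊) (fun k _ => zero_le) (Finset.mem_univ j)

lemma row_sum_le_norm (M : Mat) (i : Fin ℓ) : ∑ j, |M i j| ≤ ‖M‖ := by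
  have h1 : (∑ j, ‖M i j‖₊ : ℝ≥0) ≤ ‖M‖₊ := by
    rw [Matrix.linfty_opNNNorm_def]
    exact Finset.le_sup (f := fun i => ∑ j, ‖M i j‖₊) (Finset.mem_univ i)
  calc ∑ j, |M i j| = ((∑ j, ‖M i j‖₊ : ℝ≥0) : ℝ) := by
        push_cast; exact Finset.sum_congr rfl fun j _ => (Real.norm_eq_abs _).symm
    _ ≤ _ := h1

/-- maximal-modulus element of the spectrum realizes `specRad`. -/
lemma specRad_attained (hℓ : 1 ≤ ℓ) (M : Mat) :
    ∃ δ ∈ spectrum ℂ (cx M), ‖δ‖ = specRad ℓ M ∧ ∀ z ∈ spectrum ℂ (cx M), ‖z‖ ≤ ‖δ‖ := by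
  have : Nonempty (Fin ℓ) := ⟨⟨0, hℓ⟩⟩
  have hne : (spectrum ℂ (cx M)).Nonempty := spectrum.nonempty _
  obtain ⟨δ, hδ, hmax⟩ := (spectrum.isCompact (cx M)).exists_isMaxOn hne
    continuous_norm.continuousOn
  refine ⟨δ, hδ, ?_, fun z hz => hmax hz⟩
  have : IsGreatest ((fun δ : ℂ => ‖δ‖) '' spectrum ℂ (cx M)) ‖δ‖ :=
    ⟨Set.mem_image_of_mem _ hδ, by rintro y ⟨z, hz, rfl⟩; exact hmax hz⟩
  exact (this.csSup_eq).symm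

/-- maximal-real-part element of the spectrum. -/
lemma re_attained (hℓ : 1 ≤ ℓ) (M : Mat) :
    ∃ δ ∈ spectrum ℂ (cx M), ∀ z ∈ spectrum ℂ (cx M), z.re ≤ δ.re := by
  have : Nonempty (Fin ℓ) := ⟨⟨0, hℓ⟩⟩
  have hne : (spectrum ℂ (cx M)).Nonempty := spectrum.nonempty _
  obtain ⟨δ, hδ, hmax⟩ := (spectrum.isCompact (cx M)).exists_isMaxOn hne
    Complex.continuous_re.continuousOn
  exact ⟨δ, hδ, fun z hz => hmax hz⟩

/-- eigenvector for a spectral value of a complex matrix. -/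
lemma exists_eigenvector {A : Matrix (Fin ℓ) (Fin ℓ) ℂ} {δ : ℂ}
    (hδ : δ ∈ spectrum ℂ A) : ∃ u : Fin ℓ → ℂ, u ≠ 0 ∧ A.mulVec u = δ • u := by
  rw [spectrum.mem_iff] at hδ
  rw [Matrix.isUnit_iff_isUnit_det, isUnit_iff_ne_zero, not_ne_iff] at hδ
  obtain ⟨u, hu0, hu⟩ := (Matrix.exists_mulVec_eq_zero_iff).2 hδ
  refine ⟨u, hu0, ?_⟩
  have := hu
  rw [Algebra.algebraMap_eq_smul_one, Matrix.sub_mulVec, Matrix.smul_mulVec,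
    Matrix.one_mulVec, sub_eq_zero] at this
  exact this.symm

lemma pow_entry_nonneg {M : Mat} (hM : ∀ i j, 0 ≤ M i j) (n : ℕ) :
    ∀ i j, 0 ≤ (M ^ n) i j := by
  induction n with
  | zero => intro i j; by_cases h : i = j <;> simp [Matrix.one_apply, h]
  | succ n ih =>
      intro i j
      rw [pow_succ, Matrix.mul_apply]
      exact Finset.sum_nonneg fun k _ => mul_nonneg (ih i k) (hM k j)

lemma mulVec_mono {M : Mat} (hM : ∀ i j, 0 ≤ M i j) {v w : Fin ℓ → ℝ}
    (h : ∀ i, v i ≤ w i) : ∀ i, (M.mulVec v) i ≤ (M.mulVec w) i := by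
  intro i
  simp only [Matrix.mulVec, dotProduct]
  exact Finset.sum_le_sum fun j _ => mul_le_mul_of_nonneg_left (h j) (hM i j)

lemma mulVec_entry_nonneg {M : Mat} (hM : ∀ i j, 0 ≤ M i j) {v : Fin ℓ → ℝ}
    (hv : ∀ i, 0 ≤ v i) : ∀ i, 0 ≤ (M.mulVec v) i := by
  intro i
  simp only [Matrix.mulVec, dotProduct]
  exact Finset.sum_nonneg fun j _ => mul_nonneg (hM i j) (hv j)

lemma norm_cx (M : Mat) : ‖cx M‖ = ‖M‖ := congrArg NNReal.toReal (nnnorm_cx M)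

/-- If all spectral values have norm `< q` then eventually `‖M ^ n‖ < q ^ n`. -/
lemma eventually_norm_pow_lt (hℓ : 1 ≤ ℓ) (M : Mat) {q : ℝ}
    (h : ∀ z ∈ spectrum ℂ (cx M), ‖z‖ < q) :
    ∀ᶠ n in atTop, ‖M ^ n‖ < q ^ n := by
  obtain ⟨δ, hδ, -, hmax⟩ := specRad_attained hℓ M
  have hr0 : (0:ℝ) ≤ ‖δ‖ := norm_nonneg _
  have hq : ‖δ‖ < q := h δ hδ
  have hq0 : 0 < q := lt_of_le_of_lt hr0 hq
  have hsr : spectralRadius ℂ (cx M) < ENNReal.ofReal q := by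
    have hle : spectralRadius ℂ (cx M) ≤ ENNReal.ofReal ‖δ‖ := by
      rw [spectralRadius]
      refine iSup₂_le fun z hz => ?_
      rw [← enorm_eq_nnnorm, ← ofReal_norm]
      exact ENNReal.ofReal_le_ofReal (hmax z hz)
    exact lt_of_le_of_lt hle ((ENNReal.ofReal_lt_ofReal_iff hq0).2 hq)
  have hgel := spectrum.pow_nnnorm_pow_one_div_tendsto_nhds_spectralRadius (cx M)
  have hev : ∀ᶠ n : ℕ in atTop,
      ((‖(cx M) ^ n‖₊ : ℝ≥0∞) ^ (1 / (n:ℝ))) < ENNReal.ofReal q :=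
    hgel.eventually_lt_const hsr
  filter_upwards [hev, eventually_ge_atTop 1] with n hn hn1
  have hnpos : (0:ℝ) < (n:ℝ) := by exact_mod_cast hn1
  have hx : ((‖(cx M) ^ n‖₊ : ℝ≥0∞) ^ (1 / (n:ℝ))) ^ (n:ℝ) = (‖(cx M) ^ n‖₊ : ℝ≥0∞) := by
    rw [← ENNReal.rpow_mul, one_div_mul_cancel (ne_of_gt hnpos), ENNReal.rpow_one]
  have h2 : (‖(cx M) ^ n‖₊ : ℝ≥0∞) < (ENNReal.ofReal q) ^ (n:ℝ) := by
    rw [← hx]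
    exact ENNReal.rpow_lt_rpow hn hnpos
  rw [ENNReal.ofReal_rpow_of_pos hq0, Real.rpow_natCast,
    ← enorm_eq_nnnorm, ← ofReal_norm] at h2
  have h3 : ‖(cx M) ^ n‖ < q ^ n :=
    (ENNReal.ofReal_lt_ofReal_iff (by positivity)).1 h2
  rwa [← cx_pow, norm_cx] at h3

/-- Gelfand-type lower bound: a nonnegative sub-eigenvector gives a lower bound
on the spectral radius of an entrywise-nonnegative matrix. -/
lemma le_specRad_of_subeig (hℓ : 1 ≤ ℓ) (M : Mat) (hM : ∀ i j, 0 ≤ M i j)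
    {x : Fin ℓ → ℝ} (hx : ∀ i, 0 ≤ x i) (hx0 : x ≠ 0) {μ : ℝ} (hμ : 0 ≤ μ)
    (h : ∀ i, μ * x i ≤ M.mulVec x i) : μ ≤ specRad ℓ M := by
  obtain ⟨δ, hδ, hδr, hmax⟩ := specRad_attained hℓ M
  by_contra hcon
  push_neg at hcon
  have hr0' : 0 ≤ specRad ℓ M := hδr ▸ norm_nonneg δ
  have hμpos : 0 < μ := lt_of_le_of_lt hr0' hcon
  -- iterate the sub-eigenvector inequality
  have hiter : ∀ n, ∀ i, μ ^ n * x i ≤ ((M ^ n).mulVec x) i := by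
    intro n
    induction n with
    | zero => intro i; simp [Matrix.one_mulVec]
    | succ n ih =>
        intro i
        have e1 : (M ^ (n+1)).mulVec x = (M ^ n).mulVec (M.mulVec x) := by
          rw [pow_succ, ← Matrix.mulVec_mulVec]
        rw [e1]
        have step1 : ∀ i, ((M ^ n).mulVec (fun j => μ * x j)) i
            ≤ ((M ^ n).mulVec (M.mulVec x)) i :=
          mulVec_mono (pow_entry_nonneg hM n) h
        have step2 : ((M ^ n).mulVec (fun j => μ * x j)) i
            = μ * ((M ^ n).mulVec x) i := by
          simp only [Matrix.mulVec, dotProduct]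
          rw [Finset.mul_sum]
          exact Finset.sum_congr rfl fun j _ => by ring
        calc μ ^ (n+1) * x i = μ * (μ ^ n * x i) := by ring
          _ ≤ μ * ((M ^ n).mulVec x) i := by
              exact mul_le_mul_of_nonneg_left (ih i) (le_of_lt hμpos)
          _ = ((M ^ n).mulVec (fun j => μ * x j)) i := step2.symm
          _ ≤ _ := step1 i
  -- pick a positive coordinate
  obtain ⟨i₀, hi₀⟩ : ∃ i, x i ≠ 0 := Function.ne_iff.1 hx0
  have hxi₀ : 0 < x i₀ := lt_of_le_of_ne (hx i₀) (Ne.symm hi₀)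
  -- bound via norms
  have hXnn : 0 ≤ ‖x‖ := norm_nonneg _
  have hbound : ∀ n, μ ^ n * x i₀ ≤ ‖M ^ n‖ * ‖x‖ := by
    intro n
    refine (hiter n i₀).trans ?_
    have : ((M ^ n).mulVec x) i₀ = ∑ j, (M ^ n) i₀ j * x j := rfl
    rw [this]
    calc ∑ j, (M ^ n) i₀ j * x j ≤ ∑ j, |(M ^ n) i₀ j| * ‖x‖ := by
          refine Finset.sum_le_sum fun j _ => ?_
          have h1 : x j ≤ ‖x‖ := le_trans (le_abs_self _) (norm_le_pi_norm x j)
          exact mul_le_mul (le_abs_self _) h1 (hx j) (abs_nonneg _)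
      _ = (∑ j, |(M ^ n) i₀ j|) * ‖x‖ := by rw [Finset.sum_mul]
      _ ≤ ‖M ^ n‖ * ‖x‖ := mul_le_mul_of_nonneg_right (row_sum_le_norm _ _) hXnn
  -- choose q between specRad and μ
  set r := specRad ℓ M with hrdef
  have hr0 : 0 ≤ r := hδr ▸ norm_nonneg δ
  set q := (r + μ) / 2 with hqdef
  have hrq : r < q := by simp [hqdef]; linarith
  have hqμ : q < μ := by simp [hqdef]; linarith
  have hq0 : 0 < q := lt_of_le_of_lt hr0 hrq
  have hev := eventually_norm_pow_lt hℓ M (q := q)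
    (fun z hz => lt_of_le_of_lt (hδr ▸ hmax z hz) hrq)
  -- (μ/q)^n is unbounded
  have hquot : Tendsto (fun n : ℕ => (μ / q) ^ n) atTop atTop :=
    tendsto_pow_atTop_atTop_of_one_lt (by rw [lt_div_iff₀ hq0]; linarith)
  have hbig : ∀ᶠ n : ℕ in atTop, ‖x‖ / x i₀ < (μ / q) ^ n :=
    hquot.eventually_gt_atTop _
  obtain ⟨n, hn1, hn2⟩ := (hev.and hbig).exists
  have hc1 : μ ^ n * x i₀ ≤ ‖M ^ n‖ * ‖x‖ := hbound n
  have hc2 : ‖M ^ n‖ * ‖x‖ ≤ q ^ n * ‖x‖ := mul_le_mul_of_nonneg_right hn1.le hXnn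
  have hqn : 0 < q ^ n := pow_pos hq0 n
  have : (μ / q) ^ n ≤ ‖x‖ / x i₀ := by
    rw [div_pow, div_le_div_iff₀ hqn hxi₀]
    exact (hc1.trans hc2).trans_eq (mul_comm _ _)
  exact absurd this (not_le.2 hn2)

lemma abs_subeig_nonneg (M : Mat) (hM : ∀ i j, 0 ≤ M i j) {δ : ℂ}
    (hδ : δ ∈ spectrum ℂ (cx M)) :
    ∃ x : Fin ℓ → ℝ, (∀ i, 0 ≤ x i) ∧ x ≠ 0 ∧ ∀ i, ‖δ‖ * x i ≤ M.mulVec x i := by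
  obtain ⟨u, hu0, hu⟩ := exists_eigenvector hδ
  refine ⟨fun i => ‖u i‖, fun i => norm_nonneg _, ?_, ?_⟩
  · obtain ⟨i, hi⟩ := Function.ne_iff.1 hu0
    exact Function.ne_iff.2 ⟨i, by simpa using hi⟩
  · intro i
    have h1 : ((cx M).mulVec u) i = δ * u i := by rw [hu]; rfl
    have h2 : ‖δ * u i‖ = ‖δ‖ * ‖u i‖ := norm_mul _ _
    calc ‖δ‖ * ‖u i‖ = ‖((cx M).mulVec u) i‖ := by rw [h1, h2]
      _ = ‖∑ j, (cx M) i j * u j‖ := rfl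
      _ ≤ ∑ j, ‖(cx M) i j * u j‖ := norm_sum_le _ _
      _ = ∑ j, M i j * ‖u j‖ := by
          refine Finset.sum_congr rfl fun j _ => ?_
          rw [norm_mul]
          congr 1
          simp [Matrix.map_apply, Complex.norm_real, abs_of_nonneg (hM i j)]
      _ = M.mulVec (fun j => ‖u j‖) i := rfl

lemma abs_subeig_metzler (A : Mat) (hA : ∀ i j, i ≠ j → 0 ≤ A i j) {δ : ℂ}
    (hδ : δ ∈ spectrum ℂ (cx A)) :
    ∃ x : Fin ℓ → ℝ, (∀ i, 0 ≤ x i) ∧ x ≠ 0 ∧ ∀ i, δ.re * x i ≤ A.mulVec x i := by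
  set c : ℝ := ∑ k, |A k k| with hc
  set M : Mat := A + c • (1 : Mat) with hMdef
  have hMnn : ∀ i j, 0 ≤ M i j := by
    intro i j
    by_cases h : i = j
    · subst h
      have h1 : |A i i| ≤ c := Finset.single_le_sum
        (f := fun k => |A k k|) (fun k _ => abs_nonneg _) (Finset.mem_univ i)
      have : M i i = A i i + c := by simp [hMdef, Matrix.one_apply]
      rw [this]
      have := neg_abs_le (A i i)
      linarith
    · have : M i j = A i j := by simp [hMdef, Matrix.one_apply, h]
      rw [this]; exact hA i j h
  have hcxM : cx M = algebraMap ℂ _ (c : ℂ) + cx A := by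
    rw [hMdef, cx_add, cx_smul, cx_one, Algebra.algebraMap_eq_smul_one, add_comm]
  have hδc : (c:ℂ) + δ ∈ spectrum ℂ (cx M) := by
    rw [hcxM, ← spectrum.singleton_add_eq]
    exact Set.add_mem_add (Set.mem_singleton _) hδ
  obtain ⟨x, hx, hx0, hineq⟩ := abs_subeig_nonneg M hMnn hδc
  refine ⟨x, hx, hx0, fun i => ?_⟩
  have h1 : M.mulVec x i = A.mulVec x i + c * x i := by
    rw [hMdef, Matrix.add_mulVec, Matrix.smul_mulVec, Matrix.one_mulVec]
    rfl
  have h2 : (δ.re + c) * x i ≤ ‖(c:ℂ) + δ‖ * x i := by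
    refine mul_le_mul_of_nonneg_right ?_ (hx i)
    have := Complex.re_le_norm ((c:ℂ) + δ)
    simp only [Complex.add_re, Complex.ofReal_re] at this
    linarith
  have h3 := hineq i
  rw [h1] at h3
  linarith [le_trans h2 h3]

/-- If a Metzler matrix has a nonnegative nonzero sub-eigenvector with rate `ε`, then it
has a spectral value with real part at least `ε`. -/
lemma exists_re_ge (hℓ : 1 ≤ ℓ) (A : Mat) (hA : ∀ i j, i ≠ j → 0 ≤ A i j)
    {y : Fin ℓ → ℝ} (hy : ∀ i, 0 ≤ y i) (hy0 : y ≠ 0) {ε : ℝ}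
    (h : ∀ i, ε * y i ≤ A.mulVec y i) :
    ∃ δ ∈ spectrum ℂ (cx A), ε ≤ δ.re := by
  by_contra hcon
  push_neg at hcon
  -- maximal real part σ and norm bound R on the spectrum
  obtain ⟨δ₁, hδ₁, hremax⟩ := re_attained hℓ A
  obtain ⟨δ₂, hδ₂, _, hnmax⟩ := specRad_attained hℓ A
  set σ : ℝ := δ₁.re with hσdef
  set R : ℝ := ‖δ₂‖ with hRdef
  have hR0 : 0 ≤ R := norm_nonneg _
  have hσε : σ < ε := hcon δ₁ hδ₁
  have hg : 0 < ε - σ := by linarith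
  -- choose a large shift c
  set c : ℝ := 1 + max (max (∑ k, |A k k|) (-ε)) (max R ((R^2 + σ^2 - ε^2)/(2*(ε - σ)))) with hcdef
  have hc1 : ∑ k, |A k k| ≤ c := by
    have := le_max_left (∑ k, |A k k|) (-ε)
    have := le_max_left (max (∑ k, |A k k|) (-ε)) (max R ((R^2 + σ^2 - ε^2)/(2*(ε - σ))))
    simp only [hcdef]
    linarith [le_max_left (∑ k, |A k k|) (-ε),
      le_max_left (max (∑ k, |A k k|) (-ε)) (max R ((R^2 + σ^2 - ε^2)/(2*(ε - σ))))]
  have hc2 : -ε ≤ c := by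
    simp only [hcdef]
    linarith [le_max_right (∑ k, |A k k|) (-ε),
      le_max_left (max (∑ k, |A k k|) (-ε)) (max R ((R^2 + σ^2 - ε^2)/(2*(ε - σ))))]
  have hc3 : R ≤ c := by
    simp only [hcdef]
    linarith [le_max_left R ((R^2 + σ^2 - ε^2)/(2*(ε - σ))),
      le_max_right (max (∑ k, |A k k|) (-ε)) (max R ((R^2 + σ^2 - ε^2)/(2*(ε - σ))))]
  have hc4 : (R^2 + σ^2 - ε^2)/(2*(ε - σ)) < c := by
    simp only [hcdef]
    have h1 := le_max_right R ((R^2 + σ^2 - ε^2)/(2*(ε - σ)))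
    have h2 := le_max_right (max (∑ k, |A k k|) (-ε)) (max R ((R^2 + σ^2 - ε^2)/(2*(ε - σ))))
    linarith
  have hkey : (σ + c)^2 + R^2 < (ε + c)^2 := by
    have h5 : (R^2 + σ^2 - ε^2) < 2*(ε - σ) * c := by
      rw [div_lt_iff₀ (by linarith : 0 < 2*(ε - σ))] at hc4
      linarith
    nlinarith
  -- the shifted matrix
  set M : Mat := A + c • (1 : Mat) with hMdef
  have hMnn : ∀ i j, 0 ≤ M i j := by
    intro i j
    by_cases hij : i = j
    · subst hij
      have h1 : |A i i| ≤ ∑ k, |A k k| := Finset.single_le_sum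
        (f := fun k => |A k k|) (fun k _ => abs_nonneg _) (Finset.mem_univ i)
      have : M i i = A i i + c := by simp [hMdef, Matrix.one_apply]
      rw [this]
      have := neg_abs_le (A i i)
      linarith
    · have : M i j = A i j := by simp [hMdef, Matrix.one_apply, hij]
      rw [this]; exact hA i j hij
  have hMsub : ∀ i, (ε + c) * y i ≤ M.mulVec y i := by
    intro i
    have h1 : M.mulVec y i = A.mulVec y i + c * y i := by
      rw [hMdef, Matrix.add_mulVec, Matrix.smul_mulVec, Matrix.one_mulVec]
      rfl
    have := h i
    rw [h1]; linarith [h i]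
  have hrad : ε + c ≤ specRad ℓ M :=
    le_specRad_of_subeig hℓ M hMnn hy hy0 (by linarith) hMsub
  -- the attained maximal-modulus spectral value of M
  obtain ⟨δM, hδM, hδMr, _⟩ := specRad_attained hℓ M
  -- relate spectra of M and A
  have hcxM : cx M = algebraMap ℂ _ (c : ℂ) + cx A := by
    rw [hMdef, cx_add, cx_smul, cx_one, Algebra.algebraMap_eq_smul_one, add_comm]
  have hshift : ∃ z ∈ spectrum ℂ (cx A), δM = ↑c + z := by
    have : δM ∈ ({(c:ℂ)} : Set ℂ) + spectrum ℂ (cx A) := by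
      rw [spectrum.singleton_add_eq, ← hcxM]; exact hδM
    obtain ⟨a, ha, z, hz, hsum⟩ := Set.mem_add.1 this
    exact ⟨z, hz, by rw [← hsum, Set.eq_of_mem_singleton ha]⟩
  obtain ⟨z, hz, hzeq⟩ := hshift
  -- bounds on z
  have hzre : z.re ≤ σ := hremax z hz
  have hznorm : ‖z‖ ≤ R := hnmax z hz
  have him : z.im^2 ≤ R^2 := by
    have h1 : |z.im| ≤ R := (Complex.abs_im_le_norm z).trans hznorm
    calc z.im^2 = |z.im|^2 := (sq_abs _).symm
      _ ≤ R^2 := pow_le_pow_left₀ (abs_nonneg _) h1 2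
  have hεc : 0 ≤ ε + c := by linarith
  have hδMge : ε + c ≤ ‖δM‖ := by rw [hδMr]; exact hrad
  have hnormsq : ‖δM‖^2 = (z.re + c)^2 + z.im^2 := by
    rw [hzeq, Complex.sq_norm, Complex.normSq_apply]
    simp [Complex.add_re, Complex.add_im]
    ring
  have hrec : 0 ≤ z.re + c := by
    have h1 : |z.re| ≤ ‖z‖ := Complex.abs_re_le_norm z
    have h2 := neg_abs_le z.re
    linarith
  have hsq1 : (ε + c)^2 ≤ ‖δM‖^2 := pow_le_pow_left₀ hεc hδMge 2
  have hsq2 : (z.re + c)^2 ≤ (σ + c)^2 := pow_le_pow_left₀ hrec (by linarith) 2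
  linarith

/-- entry evaluation as a continuous linear map (w.r.t. the linfty operator norm). -/
noncomputable def entryCLM (i j : Fin ℓ) : Mat →L[ℝ] ℝ :=
  LinearMap.mkContinuous
    { toFun := fun M => M i j
      map_add' := fun M N => rfl
      map_smul' := fun r M => rfl } 1
    (fun M => by
      rw [one_mul]
      exact_mod_cast NNReal.coe_le_coe.2 (entry_le_nnnorm M i j))

lemma pow_entry_pos_of_path {N : Mat} (hN : ∀ i j, 0 ≤ N i j) :
    ∀ (s : ℕ) (p : ℕ → Fin ℓ), (∀ r, r < s → 0 < N (p r) (p (r+1))) →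
      0 < (N ^ s) (p 0) (p s) := by
  intro s
  induction s with
  | zero => intro p _; simp [Matrix.one_apply]
  | succ s ih =>
      intro p hp
      have h1 : 0 < (N ^ s) (p 1) (p (s+1)) := by
        have := ih (fun r => p (r+1)) (fun r hr => hp (r+1) (by omega))
        simpa using this
      rw [pow_succ', Matrix.mul_apply]
      refine Finset.sum_pos' (fun k _ => mul_nonneg (hN _ _) (pow_entry_nonneg hN s _ _))
        ⟨p 1, Finset.mem_univ _, ?_⟩
      exact mul_pos (hp 0 (by omega)) h1

/-- For an irreducible stable Metzler matrix, the inverse exists and has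
strictly negative entries. -/
lemma inv_entries_neg (hℓ : 1 ≤ ℓ) (V : Mat)
    (hMetzler : ∀ i j, i ≠ j → 0 ≤ V i j) (hirr : IrreducibleSq ℓ V)
    (hstable : ∀ δ ∈ spectrum ℂ (cx V), δ.re < 0) :
    (∀ i j, V⁻¹ i j < 0) ∧ V * V⁻¹ = 1 ∧ V⁻¹ * V = 1 := by
  obtain ⟨δ₁, hδ₁, hremax⟩ := re_attained hℓ V
  obtain ⟨δ₂, hδ₂, _, hnmax⟩ := specRad_attained hℓ V
  set σ : ℝ := δ₁.re with hσdef
  set R : ℝ := ‖δ₂‖ with hRdef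
  have hR0 : 0 ≤ R := norm_nonneg _
  have hσneg : σ < 0 := hstable δ₁ hδ₁
  set c : ℝ := 1 + max (∑ k, |V k k|) (R^2 / (2 * (-σ))) with hcdef
  have hsum_nn : 0 ≤ ∑ k, |V k k| := Finset.sum_nonneg fun k _ => abs_nonneg _
  have hc1 : ∑ k, |V k k| ≤ c - 1 := by
    simp only [hcdef]; linarith [le_max_left (∑ k, |V k k|) (R^2 / (2 * (-σ)))]
  have hc2 : R^2 / (2 * (-σ)) ≤ c - 1 := by
    simp only [hcdef]; linarith [le_max_right (∑ k, |V k k|) (R^2 / (2 * (-σ)))]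
  have hc0 : 0 < c := by
    have : 0 ≤ R^2 / (2 * (-σ)) := div_nonneg (sq_nonneg _) (by linarith)
    simp only [hcdef]
    linarith [le_max_right (∑ k, |V k k|) (R^2 / (2 * (-σ)))]
  have hcne : c ≠ 0 := ne_of_gt hc0
  -- diagonal entries are shifted to positives
  have hdiag : ∀ i, 0 < V i i + c := by
    intro i
    have h1 : |V i i| ≤ ∑ k, |V k k| := Finset.single_le_sum
      (f := fun k => |V k k|) (fun k _ => abs_nonneg _) (Finset.mem_univ i)
    have := neg_abs_le (V i i)
    linarith
  -- spectral bound : ‖δ + c‖ < c for δ in the spectrum of V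
  have hspecbound : ∀ δ ∈ spectrum ℂ (cx V), ‖(c:ℂ) + δ‖ < c := by
    intro δ hδ
    have hre : δ.re ≤ σ := hremax δ hδ
    have hnm : ‖δ‖ ≤ R := hnmax δ hδ
    have hnormsq : ‖(c:ℂ) + δ‖^2 = c^2 + 2*c*δ.re + ‖δ‖^2 := by
      rw [Complex.sq_norm, Complex.normSq_apply,
        Complex.sq_norm, Complex.normSq_apply]
      simp [Complex.add_re, Complex.add_im]
      ring
    have hδn2 : ‖δ‖^2 ≤ R^2 := pow_le_pow_left₀ (norm_nonneg _) hnm 2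
    have hcs : 2 * c * (-σ) > R^2 := by
      rw [div_le_iff₀ (by linarith : (0:ℝ) < 2 * (-σ))] at hc2
      nlinarith
    have hsq : ‖(c:ℂ) + δ‖^2 < c^2 := by
      have h2cre : 2*c*δ.re ≤ 2*c*σ := by nlinarith
      nlinarith
    exact lt_of_pow_lt_pow_left₀ 2 (le_of_lt hc0) hsq
  -- the normalized nonnegative matrix t
  set N : Mat := V + c • (1 : Mat) with hNdef
  have hNnn : ∀ i j, 0 ≤ N i j := by
    intro i j
    by_cases hij : i = j
    · subst hij
      have : N i i = V i i + c := by simp [hNdef, Matrix.one_apply]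
      rw [this]; linarith [hdiag i]
    · have : N i j = V i j := by simp [hNdef, Matrix.one_apply, hij]
      rw [this]; exact hMetzler i j hij
  have hNoff : ∀ i j, i ≠ j → N i j = V i j := by
    intro i j hij; simp [hNdef, Matrix.one_apply, hij]
  set t : Mat := c⁻¹ • N with htdef
  have htnn : ∀ i j, 0 ≤ t i j := by
    intro i j
    have : t i j = c⁻¹ * N i j := rfl
    rw [this]
    exact mul_nonneg (inv_nonneg.2 hc0.le) (hNnn i j)
  -- spectrum of t
  have hcxt : cx t = ((c⁻¹ : ℝ) : ℂ) • (algebraMap ℂ _ ((c:ℝ) : ℂ) + cx V) := by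
    rw [htdef, cx_smul, hNdef, cx_add, cx_smul, cx_one, Algebra.algebraMap_eq_smul_one, add_comm]
  have hspec_t : ∀ z ∈ spectrum ℂ (cx t), ‖z‖ < 1 := by
    intro z hz
    rw [hcxt] at hz
    have hu : (((c⁻¹ : ℝ) : ℂ)) ≠ 0 := by
      simp only [ne_eq, Complex.ofReal_eq_zero]
      exact inv_ne_zero hcne
    rw [show (((c⁻¹ : ℝ) : ℂ)) = ((Units.mk0 _ hu : ℂˣ) : ℂ) from rfl, ← Units.smul_def] at hz
    rw [spectrum.unit_smul_eq_smul, ← spectrum.singleton_add_eq] at hz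
    obtain ⟨w, hw, rfl⟩ := hz
    obtain ⟨a, ha, δ, hδ, rfl⟩ := Set.mem_add.1 hw
    have ha' : a = ((c:ℝ):ℂ) := Set.eq_of_mem_singleton ha
    subst ha'
    simp only [Units.smul_def, Units.val_mk0]
    rw [norm_smul, Complex.norm_real, Real.norm_eq_abs,
      abs_of_nonneg (inv_nonneg.2 hc0.le), inv_mul_lt_iff₀ hc0, mul_one]
    exact hspecbound δ hδ
  -- geometric decay of powers of t
  obtain ⟨zmax, hzmax, -, hzmaxmax⟩ := specRad_attained hℓ t
  set q : ℝ := (‖zmax‖ + 1) / 2 with hqdef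
  have hq1 : q < 1 := by simp only [hqdef]; linarith [hspec_t zmax hzmax]
  have hq0 : 0 ≤ q := by simp only [hqdef]; linarith [norm_nonneg zmax]
  have hev : ∀ᶠ n in atTop, ‖t ^ n‖ < q ^ n :=
    eventually_norm_pow_lt hℓ t (fun z hz =>
      lt_of_le_of_lt (hzmaxmax z hz) (by simp only [hqdef]; linarith [hspec_t zmax hzmax]))
  have hsummable : Summable (fun n : ℕ => t ^ n) := by
    refine Summable.of_norm_bounded_eventually_nat
      (summable_geometric_of_lt_one hq0 hq1) ?_
    filter_upwards [hev] with n hn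
    exact hn.le
  set S : Mat := ∑' n : ℕ, t ^ n with hSdef
  have hS : HasSum (fun n : ℕ => t ^ n) S := hsummable.hasSum
  -- the Neumann identity
  have hshift : HasSum (fun n : ℕ => t ^ (n + 1)) (S - 1) := by
    refine (hasSum_nat_add_iff 1).2 ?_
    simpa using hS
  have htS : HasSum (fun n : ℕ => t ^ (n + 1)) (t * S) := by
    have := hS.mul_left t
    refine this.congr_fun fun n => ?_
    rw [← pow_succ']
  have hkey : t * S = S - 1 := htS.unique hshift
  have hone : (1 - t) * S = 1 := by
    rw [sub_mul, one_mul, hkey]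
    abel
  -- the inverse of V
  set W : Mat := (-(c⁻¹)) • S with hWdef
  have hVW : V * W = 1 := by
    have hV : V = c • (t - 1) := by
      rw [htdef, smul_sub, smul_smul, mul_inv_cancel₀ hcne, one_smul, hNdef]
      abel
    rw [hV, hWdef, smul_mul_assoc, mul_smul_comm, smul_smul]
    rw [show c * -c⁻¹ = -1 by field_simp]
    rw [show (t - 1) * S = -((1 - t) * S) by rw [← neg_mul, neg_sub], hone]
    simp
  have hinv : V⁻¹ = W := Matrix.inv_eq_right_inv hVW
  have hWV : W * V = 1 := mul_eq_one_comm.mp hVW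
  refine ⟨?_, by rw [hinv]; exact hVW, by rw [hinv]; exact hWV⟩
  -- entrywise: S has positive entries
  intro i j
  have hentry : HasSum (fun n : ℕ => (t ^ n) i j) (S i j) := by
    have := (entryCLM i j).hasSum hS
    exact this
  have hSnn : ∀ m : ℕ, (t ^ m) i j ≤ S i j := by
    intro m
    exact le_hasSum hentry m (fun n _ => pow_entry_nonneg htnn n i j)
  -- find a power with positive entry
  have hpos : ∃ m : ℕ, 0 < (t ^ m) i j := by
    have htpow : ∀ m, (t ^ m) i j = (c⁻¹) ^ m * (N ^ m) i j := by
      intro m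
      rw [htdef, smul_pow]
      rfl
    by_cases hij : i = j
    · subst hij
      exact ⟨0, by simp [Matrix.one_apply]⟩
    · obtain ⟨s, hs2, p, hp0, hplast, hpstep⟩ := hirr i j hij
      refine ⟨s - 1, ?_⟩
      rw [htpow]
      refine mul_pos (pow_pos (inv_pos.2 hc0) _) ?_
      have := pow_entry_pos_of_path hNnn (s - 1) p (fun r hr => ?_)
      · rw [hp0, hplast] at this; exact this
      · obtain ⟨hne, hnz⟩ := hpstep r hr
        rw [hNoff _ _ hne]
        exact lt_of_le_of_ne (hMetzler _ _ hne) (Ne.symm hnz)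
  obtain ⟨m, hm⟩ := hpos
  have hSpos : 0 < S i j := lt_of_lt_of_le hm (hSnn m)
  have : V⁻¹ i j = -(c⁻¹) * S i j := by rw [hinv, hWdef]; rfl
  rw [this]
  have : 0 < c⁻¹ * S i j := mul_pos (inv_pos.2 hc0) hSpos
  linarith

/-- the master lemma. -/
lemma main (hℓ : 1 ≤ ℓ) (lam : Fin ℓ → ℝ) (hlam : ∀ j, 0 < lam j)
    (V : Mat)
    (hMetzler : ∀ i j, i ≠ j → 0 ≤ V i j)
    (hirr : IrreducibleSq ℓ V)
    (hstable : ∀ δ ∈ spectrum ℂ (cx V), δ.re < 0) :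
    (1 < specRad ℓ (-(Matrix.diagonal lam * V⁻¹)) ↔
      ∃ δ ∈ spectrum ℂ (cx (Matrix.diagonal lam + V)), 0 < δ.re) ∧
    (specRad ℓ (-(Matrix.diagonal lam * V⁻¹)) = 1 ↔
      ((∀ δ ∈ spectrum ℂ (cx (Matrix.diagonal lam + V)), δ.re ≤ 0) ∧
       (∃ δ ∈ spectrum ℂ (cx (Matrix.diagonal lam + V)), δ.re = 0))) ∧
    (specRad ℓ (-(Matrix.diagonal lam * V⁻¹)) < 1 ↔
      ∀ δ ∈ spectrum ℂ (cx (Matrix.diagonal lam + V)), δ.re < 0) := by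
  have hNE : Nonempty (Fin ℓ) := ⟨⟨0, hℓ⟩⟩
  obtain ⟨hVinv, hVW, hWV⟩ := inv_entries_neg hℓ V hMetzler hirr hstable
  set D : Mat := Matrix.diagonal lam with hDdef
  set A : Mat := D + V with hAdef
  set P : Mat := -V⁻¹ with hPdef
  set K : Mat := -(D * V⁻¹) with hKdef
  set K' : Mat := P * D with hK'def
  have hAmetzler : ∀ i j, i ≠ j → 0 ≤ A i j := by
    intro i j hij
    have : A i j = V i j := by
      simp [hAdef, hDdef, Matrix.add_apply, Matrix.diagonal_apply_ne _ hij]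
    rw [this]; exact hMetzler i j hij
  have hP : ∀ i j, 0 < P i j := fun i j => by
    have : P i j = -(V⁻¹ i j) := rfl
    rw [this]; linarith [hVinv i j]
  have hPV : P * (-V) = 1 := by
    rw [hPdef, neg_mul_neg]; exact hWV
  have hVP : (-V) * P = 1 := by
    rw [hPdef, neg_mul_neg]; exact hVW
  have hKDP : K = D * P := by rw [hKdef, hPdef, Matrix.mul_neg]
  have hKnn : ∀ i j, 0 ≤ K i j := by
    intro i j
    rw [hKDP, hDdef, Matrix.diagonal_mul]
    exact le_of_lt (mul_pos (hlam i) (hP i j))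
  have hK'pos : ∀ i j, 0 < K' i j := by
    intro i j
    rw [hK'def, hDdef, Matrix.mul_diagonal]
    exact mul_pos (hP i j) (hlam j)
  -- spectra of K and K' agree
  have hspecKK' : spectrum ℂ (cx K) = spectrum ℂ (cx K') := by
    set E : Mat := Matrix.diagonal (fun i => (lam i)⁻¹) with hEdef
    have hDE : D * E = 1 := by
      rw [hDdef, hEdef, Matrix.diagonal_mul_diagonal]
      rw [show (fun i => lam i * (lam i)⁻¹) = fun _ => (1:ℝ) by
        funext i; exact mul_inv_cancel₀ (ne_of_gt (hlam i))]
      exact Matrix.diagonal_one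
    have hED : E * D = 1 := mul_eq_one_comm.mp hDE
    have hcDE : cx D * cx E = 1 := by rw [← cx_mul, hDE, cx_one]
    have hcED : cx E * cx D = 1 := by rw [← cx_mul, hED, cx_one]
    set u : (Matrix (Fin ℓ) (Fin ℓ) ℂ)ˣ := ⟨cx D, cx E, hcDE, hcED⟩ with hudef
    have hKconj : cx K = u.val * cx K' * (u⁻¹).val := by
      have h1 : K = D * K' * E := by
        rw [hK'def, hKDP, ← Matrix.mul_assoc, Matrix.mul_assoc (D * P) D E, hDE,
          Matrix.mul_one]
      rw [h1, cx_mul, cx_mul]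
      rfl
    rw [hKconj]
    exact spectrum.units_conjugate
  have hsrKK' : specRad ℓ K = specRad ℓ K' := by
    unfold specRad
    rw [show ((-(Matrix.diagonal lam * V⁻¹) : Mat).map (Complex.ofReal ·)) = cx K from rfl,
      hspecKK']
  -- minimum of lam
  set m : ℝ := Finset.univ.inf' (Finset.univ_nonempty) lam with hmdef
  have hm : 0 < m := (Finset.lt_inf'_iff _).2 fun i _ => hlam i
  have hmle : ∀ i, m ≤ lam i := fun i => Finset.inf'_le _ (Finset.mem_univ i)
  -- Direction I : spectral values of A with nonneg real part push specRad K' up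
  have dirI : ∀ δ ∈ spectrum ℂ (cx A),
      (0 ≤ δ.re → 1 ≤ specRad ℓ K') ∧ (0 < δ.re → 1 < specRad ℓ K') := by
    intro δ hδ
    obtain ⟨x, hx, hx0, hsub⟩ := abs_subeig_metzler A hAmetzler hδ
    set σ := δ.re with hσdef
    set w := P.mulVec x with hwdef
    obtain ⟨j₀, hj₀⟩ := Function.ne_iff.1 hx0
    have hxj₀ : 0 < x j₀ := lt_of_le_of_ne (hx j₀) (Ne.symm hj₀)
    have hw : ∀ i, 0 < w i := by
      intro i
      rw [hwdef]
      have : P.mulVec x i = ∑ j, P i j * x j := rfl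
      rw [this]
      refine Finset.sum_pos' (fun j _ => mul_nonneg (hP i j).le (hx j)) ?_
      exact ⟨j₀, Finset.mem_univ _, mul_pos (hP i j₀) hxj₀⟩
    have hDx : ∀ i, (σ • x + (-V).mulVec x) i ≤ D.mulVec x i := by
      intro i
      have h1 := hsub i
      have h2 : A.mulVec x i = D.mulVec x i + V.mulVec x i := by
        rw [hAdef, Matrix.add_mulVec]; rfl
      have h3 : (σ • x + (-V).mulVec x) i = σ * x i + -(V.mulVec x i) := by
        rw [Matrix.neg_mulVec]; rfl
      rw [h3]; rw [h2] at h1; linarith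
    have hmono := mulVec_mono (fun i j => (hP i j).le) hDx
    have hkey : ∀ i, σ * w i + x i ≤ K'.mulVec x i := by
      intro i
      have hL : P.mulVec (σ • x + (-V).mulVec x) = σ • w + x := by
        rw [Matrix.mulVec_add, Matrix.mulVec_smul, Matrix.mulVec_mulVec, hPV,
          Matrix.one_mulVec, hwdef]
      have hR : P.mulVec (D.mulVec x) = K'.mulVec x := by
        rw [Matrix.mulVec_mulVec, hK'def]
      have := hmono i
      rw [hL, hR] at this
      simpa using this
    constructor
    · intro hσ0
      refine le_specRad_of_subeig hℓ K' (fun i j => (hK'pos i j).le) hx hx0 zero_le_one ?_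
      intro i
      have := hkey i
      nlinarith [hw i, this]
    · intro hσ0
      set X : ℝ := Finset.univ.sup' (Finset.univ_nonempty) x with hXdef
      have hXle : ∀ i, x i ≤ X := fun i => Finset.le_sup' _ (Finset.mem_univ i)
      have hX0 : 0 < X := lt_of_lt_of_le hxj₀ (hXle j₀)
      set Wm : ℝ := Finset.univ.inf' (Finset.univ_nonempty) w with hWmdef
      have hWm : 0 < Wm := (Finset.lt_inf'_iff _).2 fun i _ => hw i
      have hWmle : ∀ i, Wm ≤ w i := fun i => Finset.inf'_le _ (Finset.mem_univ i)
      set η : ℝ := σ * Wm / X with hηdef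
      have hη : 0 < η := div_pos (mul_pos hσ0 hWm) hX0
      have hμ : ∀ i, (1 + η) * x i ≤ K'.mulVec x i := by
        intro i
        have h1 : η * x i ≤ η * X := mul_le_mul_of_nonneg_left (hXle i) hη.le
        have h2 : η * X = σ * Wm := by rw [hηdef]; field_simp
        have h3 : σ * Wm ≤ σ * w i := mul_le_mul_of_nonneg_left (hWmle i) hσ0.le
        have := hkey i
        nlinarith
      have := le_specRad_of_subeig hℓ K' (fun i j => (hK'pos i j).le) hx hx0
        (by linarith : (0:ℝ) ≤ 1 + η) hμ
      linarith
  -- Direction II : specRad K at least one gives a spectral value of A with large real part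
  have dirII : 1 ≤ specRad ℓ K → ∃ δ ∈ spectrum ℂ (cx A),
      (specRad ℓ K - 1) * m / specRad ℓ K ≤ δ.re := by
    intro hr
    set r : ℝ := specRad ℓ K with hrdef
    have hr0 : 0 < r := lt_of_lt_of_le one_pos hr
    obtain ⟨δK, hδK, hδKr, -⟩ := specRad_attained hℓ K
    obtain ⟨x, hx, hx0, hsub⟩ := abs_subeig_nonneg K hKnn hδK
    rw [hδKr] at hsub
    set y := P.mulVec x with hydef
    obtain ⟨j₀, hj₀⟩ := Function.ne_iff.1 hx0
    have hxj₀ : 0 < x j₀ := lt_of_le_of_ne (hx j₀) (Ne.symm hj₀)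
    have hy : ∀ i, 0 < y i := by
      intro i
      rw [hydef]
      have : P.mulVec x i = ∑ j, P i j * x j := rfl
      rw [this]
      refine Finset.sum_pos' (fun j _ => mul_nonneg (hP i j).le (hx j)) ?_
      exact ⟨j₀, Finset.mem_univ _, mul_pos (hP i j₀) hxj₀⟩
    have hy0 : y ≠ 0 := by
      obtain ⟨i⟩ := hNE
      exact Function.ne_iff.2 ⟨i, ne_of_gt (hy i)⟩
    have hxy : ∀ i, V.mulVec y i = -(x i) := by
      intro i
      have h1 : (-V).mulVec y = x := by
        rw [hydef, Matrix.mulVec_mulVec, hVP, Matrix.one_mulVec]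
      have h2 : (-V).mulVec y i = -(V.mulVec y i) := by rw [Matrix.neg_mulVec]; rfl
      rw [← h1, h2]; ring
    have hKx : ∀ i, K.mulVec x i = lam i * y i := by
      intro i
      have h1 : K.mulVec x = D.mulVec y := by
        rw [hKDP, hydef, ← Matrix.mulVec_mulVec]
      rw [h1, hDdef]
      exact Matrix.mulVec_diagonal _ _ _
    have hAy : ∀ i, A.mulVec y i = lam i * y i - x i := by
      intro i
      have h2 : A.mulVec y i = D.mulVec y i + V.mulVec y i := by
        rw [hAdef, Matrix.add_mulVec]; rfl
      rw [h2, hxy i, hDdef, Matrix.mulVec_diagonal]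
      ring
    set ε : ℝ := (r - 1) * m / r with hεdef
    have hrε : r * ε = (r - 1) * m := by rw [hεdef]; field_simp
    have hsub2 : ∀ i, ε * y i ≤ A.mulVec y i := by
      intro i
      have h1 : r * x i ≤ lam i * y i := by
        have := hsub i
        rw [hKx i] at this
        exact this
      have h2 : (r - 1) * m * y i ≤ (r - 1) * (lam i * y i) := by
        have hrm : 0 ≤ r - 1 := by linarith
        have h5 := mul_le_mul_of_nonneg_left
          (mul_le_mul_of_nonneg_right (hmle i) (hy i).le) hrm
        calc (r - 1) * m * y i = (r - 1) * (m * y i) := by ring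
          _ ≤ (r - 1) * (lam i * y i) := h5
      have h4 : r * (ε * y i) ≤ r * (A.mulVec y i) := by
        rw [hAy i, ← mul_assoc, hrε]
        nlinarith [h1, h2]
      exact le_of_mul_le_mul_left h4 hr0
    exact exists_re_ge hℓ A hAmetzler (fun i => (hy i).le) hy0 hsub2
  -- Assemble the three equivalences
  have hεnn : 1 ≤ specRad ℓ K → 0 ≤ (specRad ℓ K - 1) * m / specRad ℓ K := by
    intro hr
    exact div_nonneg (mul_nonneg (by linarith) hm.le) (by linarith)
  have iff1 : 1 < specRad ℓ K ↔ ∃ δ ∈ spectrum ℂ (cx A), 0 < δ.re := by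
    constructor
    · intro h
      obtain ⟨δ, hδ, hre⟩ := dirII h.le
      refine ⟨δ, hδ, lt_of_lt_of_le ?_ hre⟩
      exact div_pos (mul_pos (by linarith) hm) (by linarith)
    · rintro ⟨δ, hδ, hre⟩
      have := (dirI δ hδ).2 hre
      rwa [← hsrKK'] at this
  have iff3 : specRad ℓ K < 1 ↔ ∀ δ ∈ spectrum ℂ (cx A), δ.re < 0 := by
    constructor
    · intro h δ hδ
      by_contra hre
      push_neg at hre
      have := (dirI δ hδ).1 hre
      rw [← hsrKK'] at this
      linarith
    · intro hall
      by_contra hr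
      push_neg at hr
      obtain ⟨δ, hδ, hre⟩ := dirII hr
      have := hall δ hδ
      have := hεnn hr
      linarith
  refine ⟨iff1, ?_, iff3⟩
  constructor
  · intro h
    have hn1 : ¬ (1 < specRad ℓ K) := by rw [h]; exact lt_irrefl 1
    have hn3 : ¬ (specRad ℓ K < 1) := by rw [h]; exact lt_irrefl 1
    have hall : ∀ δ ∈ spectrum ℂ (cx A), δ.re ≤ 0 := by
      intro δ hδ
      by_contra hre
      push_neg at hre
      exact hn1 (iff1.2 ⟨δ, hδ, hre⟩)
    refine ⟨hall, ?_⟩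
    have := mt iff3.2 hn3
    push_neg at this
    obtain ⟨δ, hδ, hre⟩ := this
    exact ⟨δ, hδ, le_antisymm (hall δ hδ) hre⟩
  · rintro ⟨hall, δ₀, hδ₀, hre₀⟩
    have hn1 : ¬ (1 < specRad ℓ K) := by
      intro h
      obtain ⟨δ, hδ, hre⟩ := iff1.1 h
      linarith [hall δ hδ]
    have hn3 : ¬ (specRad ℓ K < 1) := by
      intro h
      have := iff3.1 h δ₀ hδ₀
      linarith
    linarith [not_lt.1 hn1, not_lt.1 hn3]

end ThresholdAux

/-- Threshold equivalence: for `B = diag(λ)` with `λ_j > 0` and `V` an irreducible Metzler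
matrix with negative stability modulus, the position of `ρ(−B V⁻¹)` with respect to `1`
agrees with the sign of the stability modulus `α(B + V)`. -/
theorem threshold_equivalence
    (ℓ : ℕ) (hℓ : 1 ≤ ℓ)
    (lam : Fin ℓ → ℝ) (hlam : ∀ j, 0 < lam j)
    (V : Matrix (Fin ℓ) (Fin ℓ) ℝ)
    (hMetzler : ∀ i j, i ≠ j → 0 ≤ V i j)
    (hirr : IrreducibleSq ℓ V)
    (hstable : ∀ δ ∈ spectrum ℂ (V.map (Complex.ofReal ·)), δ.re < 0) :
    (1 < specRad ℓ (-(Matrix.diagonal lam * V⁻¹)) ↔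
      ∃ δ ∈ spectrum ℂ ((Matrix.diagonal lam + V).map (Complex.ofReal ·)), 0 < δ.re) ∧
    (specRad ℓ (-(Matrix.diagonal lam * V⁻¹)) = 1 ↔
      ((∀ δ ∈ spectrum ℂ ((Matrix.diagonal lam + V).map (Complex.ofReal ·)), δ.re ≤ 0) ∧
       (∃ δ ∈ spectrum ℂ ((Matrix.diagonal lam + V).map (Complex.ofReal ·)), δ.re = 0))) ∧
    (specRad ℓ (-(Matrix.diagonal lam * V⁻¹)) < 1 ↔
      ∀ δ ∈ spectrum ℂ ((Matrix.diagonal lam + V).map (Complex.ofReal ·)), δ.re < 0) :=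
  ThresholdAux.main hℓ lam hlam V hMetzler hirr hstable
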